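/- The contact form ω = Σ_{i=1}^{2p} Σ_{j=1}^{p} (a_{i,2j} da_{i,2j−1} − a_{i,2j−1} da_{i,2j}) on SL(2p,ℝ) is invariant under left translation by a ∈ SL(2p,ℝ) if and only if a ∈ SO(2p). In particular, SO(2p) is the maximal subgroup of SL(2p,ℝ) leaving ω left-invariant. -/

import Mathlib

open Matrix

/-- The column index `2j - 1` (1-indexed), first member of the `j`-th pair. -/
def colA (p : ℕ) (j : Fin p) : Fin (2 * p) := ⟨2 * j.val, by have := j.isLt; omega⟩

/-- The column index `2j` (1-indexed), second member of the `j`-th pair. -/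
def colB (p : ℕ) (j : Fin p) : Fin (2 * p) := ⟨2 * j.val + 1, by have := j.isLt; omega⟩

/-- The Pfaffian form `ω = Σ_{i,j} (a_{i,2j} da_{i,2j-1} - a_{i,2j-1} da_{i,2j})`
at the point `M`, evaluated on the tangent vector `X`. -/
def omegaFun (p : ℕ) (M X : Matrix (Fin (2 * p)) (Fin (2 * p)) ℝ) : ℝ :=
  ∑ i : Fin (2 * p), ∑ j : Fin p,
    (M i (colB p j) * X i (colA p j) - M i (colA p j) * X i (colB p j))

lemma omegaFun_eq (p : ℕ) (M X : Matrix (Fin (2*p)) (Fin (2*p)) ℝ) :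
    omegaFun p M X = ∑ j : Fin p,
      ((Mᵀ * X) (colB p j) (colA p j) - (Mᵀ * X) (colA p j) (colB p j)) := by
  unfold omegaFun
  rw [Finset.sum_comm]
  simp [Matrix.mul_apply, Matrix.transpose_apply, Finset.sum_sub_distrib]

lemma colA_ne_colB (p : ℕ) (j j' : Fin p) : colA p j ≠ colB p j' := by
  simp only [colA, colB, ne_eq, Fin.mk.injEq]; omega

lemma colA_inj {p : ℕ} {j j' : Fin p} (h : colA p j = colA p j') : j = j' := by
  simp only [colA, Fin.mk.injEq] at h; exact Fin.ext (by omega)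

lemma colB_inj {p : ℕ} {j j' : Fin p} (h : colB p j = colB p j') : j = j' := by
  simp only [colB, Fin.mk.injEq] at h; exact Fin.ext (by omega)

lemma col_cover (p : ℕ) (i : Fin (2 * p)) :
    ∃ j : Fin p, i = colA p j ∨ i = colB p j := by
  obtain ⟨v, hv⟩ := i
  refine ⟨⟨v / 2, by omega⟩, ?_⟩
  rcases Nat.even_or_odd v with ⟨m, hm⟩ | ⟨m, hm⟩
  · left; apply Fin.ext; simp only [colA]; omega
  · right; apply Fin.ext; simp only [colB]; omega

lemma mul_std {p : ℕ} (S : Matrix (Fin (2*p)) (Fin (2*p)) ℝ) (k c r c' : Fin (2*p)) :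
    (S * single k c (1:ℝ)) r c' = if c' = c then S r k else 0 := by
  by_cases h : c' = c
  · subst h; rw [mul_single_apply_same, mul_one, if_pos rfl]
  · rw [mul_single_apply_of_ne (hbj := h), if_neg h]

lemma key (p : ℕ) (hp : 0 < p) (S : Matrix (Fin (2*p)) (Fin (2*p)) ℝ) (hsym : Sᵀ = S)
    (hS : ∀ X : Matrix (Fin (2*p)) (Fin (2*p)) ℝ, X.trace = 0 →
      ∑ j : Fin p, ((S*X) (colB p j) (colA p j) - (S*X) (colA p j) (colB p j)) = 0) :
    S = 0 := by
  have hTA : ∀ (k : Fin (2*p)) (j : Fin p),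
      ∑ j' : Fin p, ((S * single k (colA p j) (1:ℝ)) (colB p j') (colA p j')
        - (S * single k (colA p j) (1:ℝ)) (colA p j') (colB p j')) = S (colB p j) k := by
    intro k j
    rw [Finset.sum_eq_single j]
    · rw [mul_std, mul_std, if_pos rfl, if_neg (colA_ne_colB p j j).symm, sub_zero]
    · intro j' _ hj'
      rw [mul_std, mul_std, if_neg (fun h => hj' (colA_inj h)),
        if_neg (fun h => colA_ne_colB p j j' h.symm), sub_zero]
    · simp
  have hTB : ∀ (k : Fin (2*p)) (j : Fin p),
      ∑ j' : Fin p, ((S * single k (colB p j) (1:ℝ)) (colB p j') (colA p j')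
        - (S * single k (colB p j) (1:ℝ)) (colA p j') (colB p j')) = -(S (colA p j) k) := by
    intro k j
    rw [Finset.sum_eq_single j]
    · rw [mul_std, mul_std, if_pos rfl, if_neg (colA_ne_colB p j j), zero_sub]
    · intro j' _ hj'
      rw [mul_std, mul_std, if_neg (colA_ne_colB p j' j),
        if_neg (fun h => hj' (colB_inj h)), sub_zero]
    · simp
  -- off-diagonal vanishing
  have hoffA : ∀ (k : Fin (2*p)) (j : Fin p), k ≠ colA p j → S (colB p j) k = 0 := by
    intro k j hk
    rw [← hTA k j]
    exact hS _ (Matrix.trace_single_eq_of_ne _ _ _ hk)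
  have hoffB : ∀ (k : Fin (2*p)) (j : Fin p), k ≠ colB p j → S (colA p j) k = 0 := by
    intro k j hk
    have := hS _ (Matrix.trace_single_eq_of_ne k (colB p j) (1:ℝ) hk)
    rw [hTB k j] at this
    linarith
  -- diagonal entries: S (colB j) (colA j) = - S (colA j) (colB j), and symmetry kills them
  have hdiag : ∀ j : Fin p, S (colB p j) (colA p j) = 0 := by
    intro j
    have htr : (single (colA p j) (colA p j) (1:ℝ)
        - single (colB p j) (colB p j) (1:ℝ)).trace = 0 := by
      rw [Matrix.trace_sub, Matrix.trace_single_eq_same, Matrix.trace_single_eq_same, sub_self]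
    have h0 := hS _ htr
    have hsplit : ∀ j' : Fin p,
        (S * (single (colA p j) (colA p j) (1:ℝ) - single (colB p j) (colB p j) (1:ℝ))) (colB p j') (colA p j')
          - (S * (single (colA p j) (colA p j) (1:ℝ) - single (colB p j) (colB p j) (1:ℝ))) (colA p j') (colB p j')
        = ((S * single (colA p j) (colA p j) (1:ℝ)) (colB p j') (colA p j')
            - (S * single (colA p j) (colA p j) (1:ℝ)) (colA p j') (colB p j'))
          - ((S * single (colB p j) (colB p j) (1:ℝ)) (colB p j') (colA p j')
            - (S * single (colB p j) (colB p j) (1:ℝ)) (colA p j') (colB p j')) := by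
      intro j'
      rw [Matrix.mul_sub, Matrix.sub_apply, Matrix.sub_apply]
      ring
    rw [Finset.sum_congr rfl (fun j' _ => hsplit j'), Finset.sum_sub_distrib,
      hTA (colA p j) j, hTB (colB p j) j] at h0
    have hsame := congrFun (congrFun hsym (colA p j)) (colB p j)
    rw [Matrix.transpose_apply] at hsame
    linarith
  -- conclude
  ext r k
  obtain ⟨j, hj | hj⟩ := col_cover p r
  · subst hj
    by_cases hk : k = colB p j
    · subst hk
      have := hdiag j
      have hsame := congrFun (congrFun hsym (colA p j)) (colB p j)
      rw [Matrix.transpose_apply] at hsame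
      simp [← hsame, this]
    · simp [hoffB k j hk]
  · subst hj
    by_cases hk : k = colA p j
    · subst hk; simp [hdiag j]
    · simp [hoffA k j hk]


/-- The contact form `ω` on `SL(2p,ℝ)` is invariant under left translation
`L_a : b ↦ a b` (as a form on `SL(2p,ℝ)`, i.e. at points `b` of `SL(2p,ℝ)` and on
tangent vectors `X` to `SL(2p,ℝ)` at `b`) if and only if `a ∈ SO(2p)`; thus
`SO(2p)` is the maximal subgroup of `SL(2p,ℝ)` leaving `ω` left-invariant. -/
theorem left_invariance_iff_SO (p : ℕ) (hp : 0 < p)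
    (a : Matrix (Fin (2 * p)) (Fin (2 * p)) ℝ) (ha : a.det = 1) :
    (∀ b X : Matrix (Fin (2 * p)) (Fin (2 * p)) ℝ, b.det = 1 →
        (b.adjugate * X).trace = 0 →
        omegaFun p (a * b) (a * X) = omegaFun p b X) ↔
      aᵀ * a = 1 := by
  constructor
  · intro h
    have hsym : (aᵀ * a - 1)ᵀ = aᵀ * a - 1 := by
      rw [Matrix.transpose_sub, Matrix.transpose_mul, Matrix.transpose_transpose,
        Matrix.transpose_one]
    have hS : ∀ X : Matrix (Fin (2*p)) (Fin (2*p)) ℝ, X.trace = 0 →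
        ∑ j : Fin p, (((aᵀ * a - 1)*X) (colB p j) (colA p j)
          - ((aᵀ * a - 1)*X) (colA p j) (colB p j)) = 0 := by
      intro X hX
      have heq := h 1 X Matrix.det_one (by rwa [Matrix.adjugate_one, Matrix.one_mul])
      rw [omegaFun_eq, omegaFun_eq, Matrix.mul_one, Matrix.transpose_one,
        Matrix.one_mul] at heq
      have hSX : (aᵀ * a - 1) * X = aᵀ * (a * X) - X := by
        rw [Matrix.sub_mul, Matrix.one_mul, Matrix.mul_assoc]
      rw [hSX]
      have hterm : ∀ j : Fin p,
          ((aᵀ * (a * X) - X) (colB p j) (colA p j)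
            - (aᵀ * (a * X) - X) (colA p j) (colB p j))
          = ((aᵀ * (a * X)) (colB p j) (colA p j)
              - (aᵀ * (a * X)) (colA p j) (colB p j))
            - (X (colB p j) (colA p j) - X (colA p j) (colB p j)) := by
        intro j; simp only [Matrix.sub_apply]; ring
      rw [Finset.sum_congr rfl (fun j _ => hterm j), Finset.sum_sub_distrib, heq, sub_self]
    have := key p hp (aᵀ * a - 1) hsym hS
    rwa [sub_eq_zero] at this
  · intro h b X hb hX
    rw [omegaFun_eq, omegaFun_eq]
    have : (a * b)ᵀ * (a * X) = bᵀ * X := by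
      rw [Matrix.transpose_mul, Matrix.mul_assoc, ← Matrix.mul_assoc aᵀ a X, h,
        Matrix.one_mul]
    rw [this]
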